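/- A partitioned permutation of {1,…,n} is a pair (𝒱, π) with π ∈ S_n and 𝒱 a partition of {1,…,n} with 0_π ≤ 𝒱, and its length is |(𝒱,π)| := 2|𝒱| − |π|. Then for all partitioned permutations (𝒱,π) and (𝒲,σ) of {1,…,n}: |(𝒱 ∨ 𝒲, πσ)| ≤ |(𝒱,π)| + |(𝒲,σ)|. -/

import Mathlib

/-- The partition of `{1,…,n}` into orbits (cycles) of a permutation, as a setoid. -/
def orbitSetoid {α : Type*} (π : Equiv.Perm α) : Setoid α where
  r := π.SameCycle
  iseqv := ⟨fun x => Equiv.Perm.SameCycle.refl π x, fun h => h.symm, fun h h' => h.trans h'⟩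

/-- The length `|𝒰| := n − #𝒰` of a partition of `{1,…,n}`, where `#𝒰` is the number of
blocks. -/
noncomputable def pLen {n : ℕ} (V : Setoid (Fin n)) : ℤ :=
  (n : ℤ) - Nat.card (Quotient V)

/-- The length `|π| := n − #π` of a permutation, where `#π` is the number of cycles
(orbits) of `π`. -/
noncomputable def permLen {n : ℕ} (π : Equiv.Perm (Fin n)) : ℤ :=
  (n : ℤ) - Nat.card (Quotient (orbitSetoid π))

/-- A partitioned permutation of `{1,…,n}`: a pair `(𝒱, π)` with `π ∈ S_n` and `𝒱` a
partition of `{1,…,n}` with `0_π ≤ 𝒱` (the orbit partition of `π` refines `𝒱`). -/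
structure PartitionedPerm (n : ℕ) where
  part : Setoid (Fin n)
  perm : Equiv.Perm (Fin n)
  hle : orbitSetoid perm ≤ part

/-- The length `|(𝒱,π)| := 2|𝒱| − |π|` of a partitioned permutation. -/
noncomputable def ppLen {n : ℕ} (a : PartitionedPerm n) : ℤ :=
  2 * pLen a.part - permLen a.perm

open Equiv


section Merge

variable {α : Type*}

theorem srel_refl (X : Setoid α) (x : α) : X x x := X.iseqv.refl x
theorem srel_symm {X : Setoid α} {x y : α} (h : X x y) : X y x := X.iseqv.symm h
theorem srel_trans {X : Setoid α} {x y z : α} (h : X x y) (h' : X y z) : X x z :=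
  X.iseqv.trans h h'

/-- The setoid obtained from `X` by additionally identifying `a` and `b`. -/
def pmerge (X : Setoid α) (a b : α) : Setoid α where
  r x y := X x y ∨ (X x a ∧ X b y) ∨ (X x b ∧ X a y)
  iseqv := by
    constructor
    · intro x; exact Or.inl (srel_refl X x)
    · rintro x y (h | ⟨h1, h2⟩ | ⟨h1, h2⟩)
      · exact Or.inl (srel_symm h)
      · exact Or.inr (Or.inr ⟨srel_symm h2, srel_symm h1⟩)
      · exact Or.inr (Or.inl ⟨srel_symm h2, srel_symm h1⟩)
    · rintro x y z (h | ⟨h1, h2⟩ | ⟨h1, h2⟩) (g | ⟨g1, g2⟩ | ⟨g1, g2⟩)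
      · exact Or.inl (srel_trans h g)
      · exact Or.inr (Or.inl ⟨srel_trans h g1, g2⟩)
      · exact Or.inr (Or.inr ⟨srel_trans h g1, g2⟩)
      · exact Or.inr (Or.inl ⟨h1, srel_trans h2 g⟩)
      · exact Or.inl (srel_trans h1 (srel_trans (srel_symm (srel_trans h2 g1)) g2))
      · exact Or.inl (srel_trans h1 g2)
      · exact Or.inr (Or.inr ⟨h1, srel_trans h2 g⟩)
      · exact Or.inl (srel_trans h1 g2)
      · exact Or.inl (srel_trans h1 (srel_trans (srel_symm (srel_trans h2 g1)) g2))

variable {X Y : Setoid α} {a b : α}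

theorem le_pmerge : X ≤ pmerge X a b := fun _ _ h => Or.inl h

theorem pmerge_rel : (pmerge X a b) a b := Or.inr (Or.inl ⟨srel_refl X a, srel_refl X b⟩)

theorem pmerge_le (hXY : X ≤ Y) (hab : Y a b) : pmerge X a b ≤ Y := by
  rintro x y (h | ⟨h1, h2⟩ | ⟨h1, h2⟩)
  · exact hXY h
  · exact srel_trans (hXY h1) (srel_trans hab (hXY h2))
  · exact srel_trans (hXY h1) (srel_trans (srel_symm hab) (hXY h2))

theorem pmerge_eq_of_rel (hab : X a b) : pmerge X a b = X :=
  le_antisymm (pmerge_le le_rfl hab) le_pmerge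

theorem pmerge_sup (P S : Setoid α) (a b : α) :
    pmerge P a b ⊔ S = pmerge (P ⊔ S) a b := by
  refine le_antisymm (sup_le ?_ ?_) ?_
  · exact pmerge_le (le_trans le_sup_left le_pmerge) pmerge_rel
  · exact le_trans le_sup_right le_pmerge
  · refine pmerge_le (sup_le (le_trans le_pmerge le_sup_left) le_sup_right) ?_
    exact (Setoid.le_def.mp le_sup_left) pmerge_rel

theorem card_quot_le_of_le [Finite α] (h : X ≤ Y) :
    Nat.card (Quotient Y) ≤ Nat.card (Quotient X) := by
  refine Nat.card_le_card_of_surjective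
    (Quotient.lift (fun x => Quotient.mk Y x) (fun x y hxy => Quotient.sound (h hxy))) ?_
  intro q
  induction q using Quotient.ind with
  | _ x => exact ⟨Quotient.mk X x, rfl⟩

theorem card_pmerge [Finite α] (hab : ¬ X a b) :
    Nat.card (Quotient (pmerge X a b)) + 1 = Nat.card (Quotient X) := by
  classical
  have hane : (Quotient.mk X a) ≠ Quotient.mk X b := fun h => hab (Quotient.exact h)
  let f : Quotient (pmerge X a b) → {c : Quotient X // c ≠ Quotient.mk X b} :=
    Quotient.lift (fun x => if h : X x b then ⟨Quotient.mk X a, hane⟩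
      else ⟨Quotient.mk X x, fun hc => h (Quotient.exact hc)⟩) (by
      intro x y hxy
      split_ifs with hx hy hy
      · rfl
      · rcases hxy with h | ⟨h1, h2⟩ | ⟨h1, h2⟩
        · exact absurd (srel_trans (srel_symm h) hx) hy
        · exact absurd (srel_trans (srel_symm h1) hx) hab
        · exact Subtype.ext (Quotient.sound h2)
      · rcases hxy with h | ⟨h1, h2⟩ | ⟨h1, h2⟩
        · exact absurd (srel_trans h hy) hx
        · exact Subtype.ext (Quotient.sound h1)
        · exact absurd h1 hx
      · rcases hxy with h | ⟨h1, h2⟩ | ⟨h1, h2⟩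
        · exact Subtype.ext (Quotient.sound h)
        · exact absurd (srel_symm h2) hy
        · exact absurd h1 hx)
  let g : {c : Quotient X // c ≠ Quotient.mk X b} → Quotient (pmerge X a b) :=
    fun c => Quotient.lift (fun x => Quotient.mk (pmerge X a b) x)
      (fun x y h => Quotient.sound (Or.inl h)) c.1
  have e : Quotient (pmerge X a b) ≃ {c : Quotient X // c ≠ Quotient.mk X b} := by
    refine ⟨f, g, ?_, ?_⟩
    · intro q
      induction q using Quotient.ind with
      | _ x =>
        by_cases hx : X x b
        · show g (dite _ _ _) = _
          rw [dif_pos hx]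
          exact Quotient.sound (Or.inr (Or.inl ⟨srel_refl X a, srel_symm hx⟩))
        · show g (dite _ _ _) = _
          rw [dif_neg hx]
          rfl
    · rintro ⟨q, hq⟩
      induction q using Quotient.ind with
      | _ x =>
        have hx : ¬ X x b := fun h => hq (Quotient.sound h)
        show f (Quotient.mk _ x) = _
        show dite _ _ _ = _
        rw [dif_neg hx]
  rw [Nat.card_congr e]
  haveI : Fintype (Quotient X) := Fintype.ofFinite _
  haveI : Nonempty (Quotient X) := ⟨Quotient.mk X b⟩
  rw [Nat.card_eq_fintype_card, Nat.card_eq_fintype_card]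
  have h2 : Fintype.card {c : Quotient X // c ≠ Quotient.mk X b} =
      Fintype.card (Quotient X) - Fintype.card {c : Quotient X // c = Quotient.mk X b} :=
    Fintype.card_subtype_compl _
  have h3 : Fintype.card {c : Quotient X // c = Quotient.mk X b} = 1 :=
    Fintype.card_subtype_eq _
  have h4 : 0 < Fintype.card (Quotient X) := Fintype.card_pos
  omega

theorem card_le_pmerge [Finite α] (a b : α) :
    Nat.card (Quotient X) ≤ Nat.card (Quotient (pmerge X a b)) + 1 := by
  by_cases h : X a b
  · rw [pmerge_eq_of_rel h]; omega
  · exact le_of_eq (card_pmerge h).symm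

theorem card_climb [Finite α] :
    ∀ (k : ℕ) (P S V : Setoid α), Nat.card (Quotient P) ≤ k → P ≤ V →
      Nat.card (Quotient V) + Nat.card (Quotient (P ⊔ S)) ≤
      Nat.card (Quotient P) + Nat.card (Quotient (V ⊔ S)) := by
  intro k
  induction k with
  | zero =>
    intro P S V hk hPV
    rcases isEmpty_or_nonempty α with he | hn
    · simp [Nat.card_of_isEmpty]
    · haveI : Nonempty (Quotient P) := Nonempty.map (Quotient.mk P) hn
      have : 0 < Nat.card (Quotient P) := Nat.card_pos
      omega
  | succ k ih =>
    intro P S V hk hPV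
    by_cases hPV' : P = V
    · subst hPV'; exact le_rfl
    · obtain ⟨a, b, hVab, hPab⟩ : ∃ a b, V a b ∧ ¬ P a b := by
        by_contra hc
        push_neg at hc
        exact hPV' (le_antisymm hPV (fun x y hxy => hc x y hxy))
      have hcard : Nat.card (Quotient (pmerge P a b)) + 1 = Nat.card (Quotient P) :=
        card_pmerge hPab
      have h1 : pmerge P a b ≤ V := pmerge_le hPV hVab
      have h2 := ih (pmerge P a b) S V (by omega) h1
      rw [pmerge_sup] at h2
      have h4 := card_le_pmerge (X := P ⊔ S) a b
      omega

theorem partition_ineq [Finite α] {P V S W : Setoid α} (hPV : P ≤ V) (hSW : S ≤ W) :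
    Nat.card (Quotient (P ⊔ S)) + Nat.card (Quotient V) + Nat.card (Quotient W) ≤
    Nat.card (Quotient P) + Nat.card (Quotient S) + Nat.card (Quotient (V ⊔ W)) := by
  have h1 := card_climb (Nat.card (Quotient P)) P S V le_rfl hPV
  have h2 := card_climb (Nat.card (Quotient S)) S V W le_rfl hSW
  rw [sup_comm S V, sup_comm W V] at h2
  omega

end Merge

section PermPart

open Equiv Equiv.Perm

set_option linter.unusedSectionVars false

variable {α : Type*} [DecidableEq α]

theorem orbitSetoid_rel {γ : Perm α} {x y : α} : (orbitSetoid γ) x y ↔ γ.SameCycle x y :=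
  Iff.rfl

theorem sameCycle_self_apply (γ : Perm α) (x : α) : γ.SameCycle x (γ x) :=
  ⟨1, by simp⟩

theorem orbitSetoid_le {γ : Perm α} {r : Setoid α} (h : ∀ x, r x (γ x)) :
    orbitSetoid γ ≤ r := by
  intro x y hxy
  obtain ⟨i, hi⟩ := hxy
  subst hi
  induction i using Int.induction_on with
  | zero => simpa using srel_refl r x
  | succ i ih =>
    have hstep : (γ ^ ((i : ℤ) + 1)) x = γ ((γ ^ (i : ℤ)) x) := by
      rw [add_comm, zpow_one_add]
      rfl
    rw [hstep]
    exact srel_trans ih (h _)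
  | pred i ih =>
    have key : (γ ^ (-(i : ℤ))) x = γ ((γ ^ (-(i : ℤ) - 1)) x) := by
      rw [← Equiv.Perm.mul_apply, ← zpow_one_add]
      norm_num
    exact srel_trans ih (srel_symm (key ▸ h ((γ ^ (-(i : ℤ) - 1)) x)))

theorem zpow_fixed {γ : Perm α} {x : α} (hx : γ x = x) (i : ℤ) : (γ ^ i) x = x := by
  induction i using Int.induction_on with
  | zero => simp
  | succ i ih => rw [zpow_add_one, Equiv.Perm.mul_apply, hx]; exact ih
  | pred i ih =>
    have : γ ((γ ^ (-(i : ℤ) - 1)) x) = (γ ^ (-(i : ℤ))) x := by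
      rw [← Equiv.Perm.mul_apply, ← zpow_one_add]
      norm_num
    rw [ih] at this
    calc (γ ^ (-(i : ℤ) - 1)) x = γ.symm (γ ((γ ^ (-(i : ℤ) - 1)) x)) := by simp
    _ = γ.symm x := by rw [this]
    _ = x := (Equiv.symm_apply_eq γ).mpr hx.symm

theorem merging [Finite α] {π : Perm α} {a b : α} (hab : a ≠ b)
    (h : ¬ π.SameCycle a b) : (π * Equiv.swap a b).SameCycle a b := by
  haveI := Fintype.ofFinite α
  set τ := Equiv.swap a b with hτ
  set π' := π * τ with hπ'
  have hex : ∃ m, 0 < m ∧ (π ^ m) b = b :=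
    ⟨orderOf π, orderOf_pos π, by rw [pow_orderOf_eq_one]; rfl⟩
  set m := Nat.find hex with hm
  obtain ⟨hm0, hmb⟩ := Nat.find_spec hex
  have key : ∀ k, 1 ≤ k → k ≤ m → (π' ^ k) a = (π ^ k) b := by
    intro k
    induction k with
    | zero => intro h1; omega
    | succ k ih =>
      intro _ hk1
      rcases Nat.eq_zero_or_pos k with rfl | hk0
      · simp [hπ', hτ, Equiv.Perm.mul_apply, Equiv.swap_apply_left]
      · have hk : k ≤ m := by omega
        have heq := ih hk0 hk
        have hklt : k < m := by omega
        have hne_a : (π ^ k) b ≠ a := by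
          intro hc
          exact h (Equiv.Perm.SameCycle.symm ⟨(k : ℤ), by rw [zpow_natCast]; exact hc⟩)
        have hne_b : (π ^ k) b ≠ b := by
          intro hc
          exact Nat.find_min hex hklt ⟨hk0, hc⟩
        calc (π' ^ (k + 1)) a = π' ((π' ^ k) a) := by
              rw [pow_succ']; simp [Equiv.Perm.mul_apply]
        _ = π (τ ((π ^ k) b)) := by rw [heq, hπ', Equiv.Perm.mul_apply]
        _ = π ((π ^ k) b) := by rw [hτ, Equiv.swap_apply_of_ne_of_ne hne_a hne_b]
        _ = (π ^ (k + 1)) b := by rw [pow_succ']; simp [Equiv.Perm.mul_apply]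
  exact ⟨(m : ℤ), by rw [zpow_natCast, key m hm0 le_rfl]; exact hmb⟩

theorem rel_swap {Y : Setoid α} {a b : α} (hab : Y a b) (x : α) : Y x (Equiv.swap a b x) := by
  rcases eq_or_ne x a with rfl | hxa
  · rw [Equiv.swap_apply_left]; exact hab
  · rcases eq_or_ne x b with rfl | hxb
    · rw [Equiv.swap_apply_right]; exact srel_symm hab
    · rw [Equiv.swap_apply_of_ne_of_ne hxa hxb]

theorem orbit_le_pmerge_right (γ : Perm α) (a b : α) :
    orbitSetoid γ ≤ pmerge (orbitSetoid (γ * Equiv.swap a b)) a b := by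
  apply orbitSetoid_le
  intro x
  have hγ : γ x = (γ * Equiv.swap a b) (Equiv.swap a b x) := by
    simp [Equiv.Perm.mul_apply]
  rw [hγ]
  refine srel_trans (rel_swap pmerge_rel x) ?_
  exact le_pmerge (sameCycle_self_apply _ _)

theorem orbit_le_pmerge_left (γ : Perm α) (a b : α) :
    orbitSetoid γ ≤ pmerge (orbitSetoid (Equiv.swap a b * γ)) a b := by
  apply orbitSetoid_le
  intro x
  have hγ : γ x = Equiv.swap a b ((Equiv.swap a b * γ) x) := by
    simp [Equiv.Perm.mul_apply]
  rw [hγ]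
  refine srel_trans (le_pmerge (sameCycle_self_apply _ _)) ?_
  exact rel_swap pmerge_rel _

theorem factA_right (γ : Perm α) (a b : α) :
    pmerge (orbitSetoid (γ * Equiv.swap a b)) a b = pmerge (orbitSetoid γ) a b := by
  refine le_antisymm ?_ (pmerge_le (orbit_le_pmerge_right γ a b) pmerge_rel)
  have h := orbit_le_pmerge_right (γ * Equiv.swap a b) a b
  rw [mul_swap_mul_self] at h
  exact pmerge_le h pmerge_rel

theorem factA_left (γ : Perm α) (a b : α) :
    pmerge (orbitSetoid (Equiv.swap a b * γ)) a b = pmerge (orbitSetoid γ) a b := by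
  refine le_antisymm ?_ (pmerge_le (orbit_le_pmerge_left γ a b) pmerge_rel)
  have h := orbit_le_pmerge_left (Equiv.swap a b * γ) a b
  rw [Equiv.swap_mul_self_mul] at h
  exact pmerge_le h pmerge_rel

end PermPart

section Genus

open Equiv Equiv.Perm

variable {n : ℕ}

theorem card_orbit_one : Nat.card (Quotient (orbitSetoid (1 : Perm (Fin n)))) = n := by
  have hb : Function.Bijective (Quotient.mk (orbitSetoid (1 : Perm (Fin n)))) := by
    constructor
    · intro x y h
      exact Equiv.Perm.sameCycle_one.mp (Quotient.exact h)
    · intro q; induction q using Quotient.ind with | _ x => exact ⟨x, rfl⟩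
  rw [← Nat.card_eq_of_bijective _ hb, Nat.card_eq_fintype_card, Fintype.card_fin]

theorem orbit_one_le {X : Setoid (Fin n)} : orbitSetoid (1 : Perm (Fin n)) ≤ X := by
  intro x y h
  have hxy : x = y := Equiv.Perm.sameCycle_one.mp h
  exact hxy ▸ srel_refl X x

theorem genus_one (π : Perm (Fin n)) :
    Nat.card (Quotient (orbitSetoid π)) +
      Nat.card (Quotient (orbitSetoid (1 : Perm (Fin n)))) +
      Nat.card (Quotient (orbitSetoid (π * 1))) ≤
    n + 2 * Nat.card (Quotient (orbitSetoid π ⊔ orbitSetoid (1 : Perm (Fin n)))) := by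
  rw [mul_one, card_orbit_one, sup_eq_left.mpr orbit_one_le]
  omega

theorem genus_aux : ∀ (k : ℕ) (π σ : Perm (Fin n)), σ.support.card ≤ k →
    Nat.card (Quotient (orbitSetoid π)) + Nat.card (Quotient (orbitSetoid σ)) +
      Nat.card (Quotient (orbitSetoid (π * σ))) ≤
    n + 2 * Nat.card (Quotient (orbitSetoid π ⊔ orbitSetoid σ)) := by
  intro k
  induction k with
  | zero =>
    intro π σ hk
    have hσ : σ = 1 := by
      rw [← Equiv.Perm.support_eq_empty_iff]
      exact Finset.card_eq_zero.mp (Nat.le_zero.mp hk)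
    subst hσ
    exact genus_one π
  | succ k ih =>
    intro π σ hk
    by_cases hσ1 : σ = 1
    · subst hσ1; exact genus_one π
    obtain ⟨a, ha⟩ : ∃ a, σ a ≠ a := by
      by_contra hc; push_neg at hc; exact hσ1 (Equiv.ext hc)
    set b := σ a with hb
    have hba : b ≠ a := by rw [hb]; exact ha
    have hab : a ≠ b := hba.symm
    set τ := Equiv.swap a b with hτ
    set π' := π * τ with hπ'
    set σ' := τ * σ with hσ'
    have hprod : π' * σ' = π * σ := by
      rw [hπ', hσ', mul_assoc, Equiv.swap_mul_self_mul]
    have hσ'a : σ' a = a := by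
      rw [hσ', Equiv.Perm.mul_apply, ← hb, hτ, Equiv.swap_apply_right]
    have hsupp : σ'.support ⊆ σ.support.erase a := by
      intro x hx
      rw [Equiv.Perm.mem_support] at hx
      rw [Finset.mem_erase, Equiv.Perm.mem_support]
      constructor
      · intro hxa
        rw [hxa] at hx
        exact hx hσ'a
      · intro hfix
        apply hx
        have hxa : x ≠ a := by
          intro h
          rw [h] at hfix
          exact ha hfix
        have hxb : x ≠ b := by
          intro h
          subst h
          exact hab (σ.injective (by rw [← hb, hfix]))
        rw [hσ', Equiv.Perm.mul_apply, hfix, hτ, Equiv.swap_apply_of_ne_of_ne hxa hxb]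
    have hcard : σ'.support.card ≤ k := by
      have h1 := Finset.card_le_card hsupp
      have h2 : a ∈ σ.support := Equiv.Perm.mem_support.mpr ha
      rw [Finset.card_erase_of_mem h2] at h1
      omega
    have IH := ih π' σ' hcard
    have f3 : (orbitSetoid σ) a b := show σ.SameCycle a b from ⟨1, by rw [zpow_one, hb]⟩
    have f4 : ¬ (orbitSetoid σ') a b := by
      intro hc
      have hc' : σ'.SameCycle a b := hc
      obtain ⟨i, hi⟩ := hc'
      rw [zpow_fixed hσ'a i] at hi
      exact hab hi
    have f5 : Nat.card (Quotient (orbitSetoid σ')) =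
        Nat.card (Quotient (orbitSetoid σ)) + 1 := by
      have h1 := card_pmerge (X := orbitSetoid σ') (a := a) (b := b) f4
      have h2 : pmerge (orbitSetoid σ') a b = orbitSetoid σ := by
        rw [hσ', hτ, factA_left, pmerge_eq_of_rel f3]
      rw [h2] at h1
      omega
    have hJab : (orbitSetoid π ⊔ orbitSetoid σ) a b := Setoid.le_def.mp le_sup_right f3
    have hJ'J : orbitSetoid π' ⊔ orbitSetoid σ' ≤ orbitSetoid π ⊔ orbitSetoid σ := by
      apply sup_le
      · apply orbitSetoid_le
        intro x
        have hx : π' x = π (τ x) := by rw [hπ', Equiv.Perm.mul_apply]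
        rw [hx, hτ]
        exact srel_trans (rel_swap hJab x)
          (Setoid.le_def.mp le_sup_left (sameCycle_self_apply π (Equiv.swap a b x)))
      · apply orbitSetoid_le
        intro x
        have hx : σ' x = τ (σ x) := by rw [hσ', Equiv.Perm.mul_apply]
        rw [hx, hτ]
        exact srel_trans (Setoid.le_def.mp le_sup_right (sameCycle_self_apply σ x))
          (rel_swap hJab (σ x))
    by_cases hα' : (orbitSetoid π') a b
    · -- case A : a and b lie in the same cycle of π'
      have f6 : Nat.card (Quotient (orbitSetoid π)) ≤
          Nat.card (Quotient (orbitSetoid π')) + 1 := by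
        have h1 := card_le_pmerge (X := orbitSetoid π) (a := a) (b := b)
        have h2 : pmerge (orbitSetoid π') a b = pmerge (orbitSetoid π) a b := by
          rw [hπ', hτ]; exact factA_right π a b
        rw [← h2, pmerge_eq_of_rel hα'] at h1
        exact h1
      have hJ'ab : (orbitSetoid π' ⊔ orbitSetoid σ') a b := Setoid.le_def.mp le_sup_left hα'
      have hJJ' : orbitSetoid π ⊔ orbitSetoid σ ≤ orbitSetoid π' ⊔ orbitSetoid σ' := by
        apply sup_le
        · apply orbitSetoid_le
          intro x
          have hx : π x = π' (τ x) := by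
            rw [hπ', Equiv.Perm.mul_apply, hτ, Equiv.swap_apply_self]
          rw [hx, hτ]
          exact srel_trans (rel_swap hJ'ab x)
            (Setoid.le_def.mp le_sup_left (sameCycle_self_apply π' (Equiv.swap a b x)))
        · apply orbitSetoid_le
          intro x
          have hx : σ x = τ (σ' x) := by
            rw [hσ', Equiv.Perm.mul_apply, hτ, Equiv.swap_apply_self]
          rw [hx, hτ]
          exact srel_trans (Setoid.le_def.mp le_sup_right (sameCycle_self_apply σ' x))
            (rel_swap hJ'ab (σ' x))
      have hJeq : Nat.card (Quotient (orbitSetoid π ⊔ orbitSetoid σ)) =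
          Nat.card (Quotient (orbitSetoid π' ⊔ orbitSetoid σ')) := by
        rw [le_antisymm hJ'J hJJ']
      rw [hprod] at IH
      omega
    · -- case B : a and b lie in different cycles of π'
      have hα : (orbitSetoid π) a b := by
        by_contra hno
        exact hα' (by rw [hπ', hτ]; exact merging hab hno)
      have f6' : Nat.card (Quotient (orbitSetoid π')) =
          Nat.card (Quotient (orbitSetoid π)) + 1 := by
        have h1 := card_pmerge (X := orbitSetoid π') (a := a) (b := b) hα'
        have h2 : pmerge (orbitSetoid π') a b = pmerge (orbitSetoid π) a b := by
          rw [hπ', hτ]; exact factA_right π a b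
        rw [h2, pmerge_eq_of_rel hα] at h1
        omega
      have hJle : orbitSetoid π ⊔ orbitSetoid σ ≤
          pmerge (orbitSetoid π' ⊔ orbitSetoid σ') a b := by
        apply sup_le
        · apply orbitSetoid_le
          intro x
          have hx : π x = π' (τ x) := by
            rw [hπ', Equiv.Perm.mul_apply, hτ, Equiv.swap_apply_self]
          rw [hx, hτ]
          refine srel_trans (rel_swap pmerge_rel x) ?_
          exact Setoid.le_def.mp (le_trans le_sup_left le_pmerge)
            (sameCycle_self_apply π' (Equiv.swap a b x))
        · apply orbitSetoid_le
          intro x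
          have hx : σ x = τ (σ' x) := by
            rw [hσ', Equiv.Perm.mul_apply, hτ, Equiv.swap_apply_self]
          rw [hx, hτ]
          refine srel_trans (Setoid.le_def.mp (le_trans le_sup_right le_pmerge)
            (sameCycle_self_apply σ' x)) ?_
          exact rel_swap pmerge_rel (σ' x)
      have h7 : Nat.card (Quotient (pmerge (orbitSetoid π' ⊔ orbitSetoid σ') a b)) ≤
          Nat.card (Quotient (orbitSetoid π ⊔ orbitSetoid σ)) := card_quot_le_of_le hJle
      have h8 := card_le_pmerge (X := orbitSetoid π' ⊔ orbitSetoid σ') (a := a) (b := b)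
      rw [hprod] at IH
      omega

end Genus

/-- Triangle inequality for partitioned permutations:
`|(𝒱 ∨ 𝒲, πσ)| ≤ |(𝒱,π)| + |(𝒲,σ)|`. -/
theorem ppLen_triangle {n : ℕ} (a b : PartitionedPerm n) :
    2 * pLen (a.part ⊔ b.part) - permLen (a.perm * b.perm) ≤ ppLen a + ppLen b := by
  have hgen := genus_aux (b.perm.support.card) a.perm b.perm le_rfl
  have hpart := partition_ineq (V := a.part) (W := b.part) a.hle b.hle
  simp only [ppLen, pLen, permLen]
  zify at hgen hpart
  linarith
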